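/- Let ≻ be a continuous, strictly convex preference relation on a compact convex subset X of ℝⁿ (n ≥ 2) with π₁(X) = [a, b], where π₁ is projection onto the first coordinate. Define s ≻' t on [a, b] by: there exists x ∈ X with π₁(x) = s such that x ≻ y for all y ∈ X with π₁(y) = t. Then ≻' is a strictly convex relation on [a, b]: for all s ≠ t in [a,b] and u strictly between s and t, either u ≻' s or u ≻' t. -/

import Mathlib

/-- A finite nonempty set with an irreflexive transitive relation has a maximal element. -/
theorem my_finset_exists_max {α : Type*} (r : α → α → Prop) :
    ∀ (t : Finset α), t.Nonempty → (∀ x ∈ t, ¬ r x x) →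
    (∀ x ∈ t, ∀ y ∈ t, ∀ z ∈ t, r x y → r y z → r x z) →
    ∃ m ∈ t, ∀ y ∈ t, ¬ r y m := by
  classical
  intro t
  induction t using Finset.induction_on with
  | empty => intro h; exact absurd h Finset.not_nonempty_empty
  | @insert a s ha ih =>
    intro _ irr tr
    rcases s.eq_empty_or_nonempty with hs | hs
    · subst hs
      refine ⟨a, Finset.mem_insert_self _ _, ?_⟩
      intro y hy
      rcases Finset.mem_insert.mp hy with rfl | hy
      · exact irr y (Finset.mem_insert_self _ _)
      · exact absurd hy (Finset.notMem_empty y)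
    · obtain ⟨m, hm, hmax⟩ := ih hs
        (fun x hx => irr x (Finset.mem_insert_of_mem hx))
        (fun x hx y hy z hz => tr x (Finset.mem_insert_of_mem hx)
          y (Finset.mem_insert_of_mem hy) z (Finset.mem_insert_of_mem hz))
      by_cases hr : r a m
      · refine ⟨a, Finset.mem_insert_self _ _, ?_⟩
        intro y hy hya
        rcases Finset.mem_insert.mp hy with rfl | hy
        · exact irr y (Finset.mem_insert_self _ _) hya
        · exact hmax y hy (tr y (Finset.mem_insert_of_mem hy) a
            (Finset.mem_insert_self _ _) m (Finset.mem_insert_of_mem hm) hya hr)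
      · refine ⟨m, Finset.mem_insert_of_mem hm, ?_⟩
        intro y hy hym
        rcases Finset.mem_insert.mp hy with rfl | hy
        · exact hr hym
        · exact hmax y hy hym

/-- A nonempty compact subset of `X` has an `r`-maximal element, for a continuous
asymmetric negatively transitive relation. -/
theorem my_exists_rMax {α : Type*} [TopologicalSpace α] {X K : Set α}
    (hKX : K ⊆ X) (hK : IsCompact K) (hne : K.Nonempty)
    {r : α → α → Prop}
    (asymm : ∀ x ∈ X, ∀ y ∈ X, r x y → ¬ r y x)
    (negtrans : ∀ x ∈ X, ∀ y ∈ X, r x y → ∀ z ∈ X, r x z ∨ r z y)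
    (cont : IsOpen {p : X × X | r p.1.1 p.2.1}) :
    ∃ m ∈ K, ∀ y ∈ K, ¬ r y m := by
  classical
  by_contra h
  push_neg at h
  -- h : ∀ m ∈ K, ∃ y ∈ K, r y m
  have hopen : ∀ y : K, ∃ O : Set α, IsOpen O ∧ ∀ x ∈ X, (x ∈ O ↔ r y.1 x) := by
    rintro ⟨y, hy⟩
    have hyX : y ∈ X := hKX hy
    have hcS : IsOpen {x : X | r y x.1} := by
      have : Continuous (fun x : X => ((⟨y, hyX⟩ : X), x)) :=
        Continuous.prodMk continuous_const continuous_id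
      exact cont.preimage this
    rw [isOpen_induced_iff] at hcS
    obtain ⟨O, hO, hOeq⟩ := hcS
    refine ⟨O, hO, fun x hx => ?_⟩
    have := congrArg (fun s => (⟨x, hx⟩ : X) ∈ s) hOeq
    simpa using this
  choose O hOopen hOiff using hopen
  have hcover : K ⊆ ⋃ i : K, O i := by
    intro x hx
    obtain ⟨y, hy, hr⟩ := h x hx
    exact Set.mem_iUnion.mpr ⟨⟨y, hy⟩, (hOiff ⟨y, hy⟩ x (hKX hx)).mpr hr⟩
  obtain ⟨fs, hfs⟩ := hK.elim_finite_subcover O hOopen hcover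
  set t : Finset α := fs.image Subtype.val with ht
  have htK : ∀ x ∈ t, x ∈ K := by
    intro x hx
    obtain ⟨i, _, rfl⟩ := Finset.mem_image.mp hx
    exact i.2
  have hbeat : ∀ x ∈ t, ∃ y ∈ t, r y x := by
    intro x hx
    have hxK : x ∈ K := htK x hx
    have := hfs hxK
    simp only [Set.mem_iUnion] at this
    obtain ⟨i, hi, hxi⟩ := this
    exact ⟨i.1, Finset.mem_image.mpr ⟨i, hi, rfl⟩, (hOiff i x (hKX hxK)).mp hxi⟩
  have htne : t.Nonempty := by
    obtain ⟨x, hx⟩ := hne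
    have := hfs hx
    simp only [Set.mem_iUnion] at this
    obtain ⟨i, hi, _⟩ := this
    exact ⟨i.1, Finset.mem_image.mpr ⟨i, hi, rfl⟩⟩
  have hirr : ∀ x ∈ t, ¬ r x x := fun x hx hr =>
    asymm x (hKX (htK x hx)) x (hKX (htK x hx)) hr hr
  have htr : ∀ x ∈ t, ∀ y ∈ t, ∀ z ∈ t, r x y → r y z → r x z := by
    intro x hx y hy z hz hxy hyz
    rcases negtrans x (hKX (htK x hx)) y (hKX (htK y hy)) hxy z (hKX (htK z hz)) with h1 | h1
    · exact h1
    · exact absurd hyz (asymm z (hKX (htK z hz)) y (hKX (htK y hy)) h1)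
  obtain ⟨m, hm, hmax⟩ := my_finset_exists_max r t htne hirr htr
  obtain ⟨y, hy, hr⟩ := hbeat m hm
  exact hmax y hy hr

open Set in
/-- The induced relation `≻'` on `π₁(X) = [a,b]` is strictly convex. -/
theorem stmt_18 {n : ℕ} (hn : 2 ≤ n) (X : Set (EuclideanSpace ℝ (Fin n)))
    (hXcomp : IsCompact X) (hXconv : Convex ℝ X)
    (r : EuclideanSpace ℝ (Fin n) → EuclideanSpace ℝ (Fin n) → Prop)
    (asymm : ∀ x ∈ X, ∀ y ∈ X, r x y → ¬ r y x)
    (negtrans : ∀ x ∈ X, ∀ y ∈ X, r x y → ∀ z ∈ X, r x z ∨ r z y)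
    (cont : IsOpen {p : X × X | r p.1.1 p.2.1})
    (strconv : ∀ x ∈ X, ∀ x' ∈ X, x ≠ x' → ∀ θ ∈ Ioo (0:ℝ) 1,
      r (θ • x + (1 - θ) • x') x ∨ r (θ • x + (1 - θ) • x') x')
    (a b : ℝ)
    (hproj : (fun x : EuclideanSpace ℝ (Fin n) => x ⟨0, by omega⟩) '' X = Icc a b)
    (hslice : ∀ s ∈ Icc a b, {x ∈ X | x ⟨0, by omega⟩ = s}.Nonempty ∧
      IsCompact {x ∈ X | x ⟨0, by omega⟩ = s} ∧ Convex ℝ {x ∈ X | x ⟨0, by omega⟩ = s}) :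
    ∀ s ∈ Icc a b, ∀ t ∈ Icc a b, s ≠ t → ∀ u ∈ Ioo (min s t) (max s t),
      (∃ x ∈ X, x ⟨0, by omega⟩ = u ∧ ∀ y ∈ X, y ⟨0, by omega⟩ = s → r x y) ∨
      (∃ x ∈ X, x ⟨0, by omega⟩ = u ∧ ∀ y ∈ X, y ⟨0, by omega⟩ = t → r x y) := by
  intro s hs t ht hst u hu
  set i : Fin n := ⟨0, by omega⟩
  -- slices
  obtain ⟨hsne, hscomp, -⟩ := hslice s hs
  obtain ⟨htne, htcomp, -⟩ := hslice t ht
  have hsub_s : {x ∈ X | x i = s} ⊆ X := fun x hx => hx.1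
  have hsub_t : {x ∈ X | x i = t} ⊆ X := fun x hx => hx.1
  obtain ⟨xs, hxs, hxsmax⟩ := my_exists_rMax hsub_s hscomp hsne asymm negtrans cont
  obtain ⟨xt, hxt, hxtmax⟩ := my_exists_rMax hsub_t htcomp htne asymm negtrans cont
  -- the combination parameter
  set θ : ℝ := (u - t) / (s - t) with hθdef
  have hstne : s - t ≠ 0 := sub_ne_zero.mpr hst
  have hθ : θ ∈ Ioo (0:ℝ) 1 := by
    rcases lt_or_gt_of_ne hst with hlt | hlt
    · have h1 : min s t = s := min_eq_left hlt.le
      have h2 : max s t = t := max_eq_right hlt.le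
      rw [h1, h2] at hu
      constructor
      · exact div_pos_of_neg_of_neg (by linarith [hu.2]) (by linarith)
      · rw [div_lt_one_of_neg (by linarith)]; linarith [hu.1]
    · have h1 : min s t = t := min_eq_right hlt.le
      have h2 : max s t = s := max_eq_left hlt.le
      rw [h1, h2] at hu
      constructor
      · exact div_pos (by linarith [hu.1]) (by linarith)
      · rw [div_lt_one (by linarith)]; linarith [hu.2]
  have hθu : θ * s + (1 - θ) * t = u := by
    field_simp [hθdef]
    have h : θ * (s - t) = u - t := by rw [hθdef]; exact div_mul_cancel₀ (u - t) hstne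
    linear_combination h
  have hne : xs ≠ xt := by
    intro hEq
    apply hst
    rw [← hxs.2, ← hxt.2, hEq]
  set z : EuclideanSpace ℝ (Fin n) := θ • xs + (1 - θ) • xt with hz
  have hzX : z ∈ X := hXconv hxs.1 hxt.1 hθ.1.le (by linarith [hθ.2]) (by ring)
  have hzi : z i = u := by
    have : z i = θ * xs i + (1 - θ) * xt i := by
      simp [hz, PiLp.add_apply, PiLp.smul_apply, smul_eq_mul]
    rw [this, hxs.2, hxt.2, hθu]
  rcases strconv xs hxs.1 xt hxt.1 hne θ hθ with hr | hr
  · left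
    refine ⟨z, hzX, hzi, ?_⟩
    intro y hyX hyi
    rcases negtrans z hzX xs hxs.1 hr y hyX with h1 | h1
    · exact h1
    · exact absurd h1 (hxsmax y ⟨hyX, hyi⟩)
  · right
    refine ⟨z, hzX, hzi, ?_⟩
    intro y hyX hyi
    rcases negtrans z hzX xt hxt.1 hr y hyX with h1 | h1
    · exact h1
    · exact absurd h1 (hxtmax y ⟨hyX, hyi⟩)
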